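/- Fix an integer n ≥ 2. Let C be the (n·(n-1)) × (n-1) matrix, with rows grouped into n consecutive blocks of n rows each and columns indexed by k ∈ {1,…,n-1}, defined as follows: every entry in the first block of n rows equals 1; for each k ∈ {1,…,n-1}, every entry of column k in the (k+1)-st block of n rows equals -1; and all other entries equal 0. Then C is totally unimodular. -/

import Mathlib

/-- The single all-ones row is totally unimodular. -/
lemma onesRow_isTotallyUnimodular (m : ℕ) :
    (Matrix.of fun (_ : Unit) (_ : Fin m) => (1 : ℚ)).IsTotallyUnimodular := by
  intro k f g hf hg
  match k with
  | 0 => exact ⟨1, by simp⟩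
  | 1 =>
    refine ⟨1, ?_⟩
    simp [Matrix.det_fin_one]
  | k + 2 =>
    exact absurd (hf (by rfl : f 0 = f 1)) (by simp)

lemma onesRow_fromRows_neg_one_isTotallyUnimodular (m : ℕ) :
    (Matrix.fromRows (Matrix.of fun (_ : Unit) (_ : Fin m) => (1 : ℚ))
      (-1 : Matrix (Fin m) (Fin m) ℚ)).IsTotallyUnimodular := by
  rw [Matrix.fromRows_isTotallyUnimodular_iff_rows]
  · exact onesRow_isTotallyUnimodular m
  · intro _ i
    refine ⟨i, SignType.neg, ?_⟩
    ext j
    by_cases h : j = i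
    · subst h; simp [Matrix.one_apply]
    · simp [Matrix.one_apply, h, Ne.symm h, Pi.single_eq_of_ne h]

/-- The matrix `C` from the proof of Theorem 4 of the paper is totally unimodular. `C` has
`n·(n-1)` rows, grouped into consecutive blocks of `n` rows each (a row is indexed by a pair
`(b, r)` where `b` is the block and `r` the position within the block), and `n-1` columns.
Every entry of the first block equals `1`; every entry of column `k` in the `(k+1)`-st block
equals `-1`; all other entries equal `0`. -/
theorem kmedoid_C_isTotallyUnimodular (n : ℕ) (hn : 2 ≤ n) :
    (Matrix.of fun (br : Fin (n - 1) × Fin n) (k : Fin (n - 1)) =>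
      if (br.1 : ℕ) = 0 then (1 : ℚ)
      else if (br.1 : ℕ) = (k : ℕ) + 1 then (-1 : ℚ)
      else 0).IsTotallyUnimodular := by
  have key := (onesRow_fromRows_neg_one_isTotallyUnimodular (n - 1)).submatrix
    (fun br : Fin (n - 1) × Fin n =>
      if h : (br.1 : ℕ) = 0 then Sum.inl ()
      else Sum.inr ⟨(br.1 : ℕ) - 1, by omega⟩)
    (id : Fin (n - 1) → Fin (n - 1))
  convert key using 2
  ext br k
  rcases br with ⟨b, r⟩
  by_cases hb : (b : ℕ) = 0
  · simp [hb, Matrix.submatrix, Matrix.fromRows, Matrix.of_apply]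
    rfl
  · have hb1 : 1 ≤ (b : ℕ) := by omega
    simp only [Matrix.submatrix, Matrix.of_apply, hb, dif_neg, if_neg hb, Matrix.fromRows,
      Sum.elim_inr, id]
    by_cases hk : (b : ℕ) = (k : ℕ) + 1
    · have : (⟨(b : ℕ) - 1, by omega⟩ : Fin (n - 1)) = k := by
        ext; simp; omega
      simp [hk, this, Matrix.one_apply]
      erw [Sum.elim_inr]; simp
    · have : (⟨(b : ℕ) - 1, by omega⟩ : Fin (n - 1)) ≠ k := by
        intro h
        apply hk
        have := congrArg (Fin.val) h
        simp at this
        omega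
      simp [hk, Matrix.one_apply, this]
      erw [Sum.elim_inr]; simp [Matrix.one_apply, this]
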